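/- arXiv:2603.07232 — 3 statements merged into one kernel-verified Lean document; each statement's English description precedes it below -/
import Mathlib

section
/- For positive integers m and c, the equation m^2 - m + 4 = c^2 holds if and only if (m, c) ∈ {(1, 2), (4, 4)}. -/
theorem stmt_0 (m c : ℤ) (hm : 0 < m) (hc : 0 < c) :
    m ^ 2 - m + 4 = c ^ 2 ↔ (m = 1 ∧ c = 2) ∨ (m = 4 ∧ c = 4) := by
  constructor
  · intro h
    have hm4 : m ≤ 4 := by
      by_contra hb
      push_neg at hb
      have h1 : c < m := by nlinarith
      have h2 : m - 1 < c := by nlinarith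
      omega
    have hc4 : c ≤ 4 := by nlinarith
    interval_cases m <;> interval_cases c <;> omega
  · rintro (⟨rfl, rfl⟩ | ⟨rfl, rfl⟩) <;> norm_num
end

section
/- For n = 4, the positive integers m for which (m+8)^2 - 16m is a perfect square are exactly m ∈ {6, 15}, and for none of these is 25m^2 + 400 - 56m a perfect square. Hence there is no positive integer m such that both (m+8)^2 - 16m and 25m^2 - 56m + 400 are perfect squares. -/
lemma aux1 : ∀ m : ℤ, 0 < m →
    ((∃ c : ℤ, (m + 8) ^ 2 - 16 * m = c ^ 2) ↔ m = 6 ∨ m = 15) := by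
  intro m hm
  constructor
  · rintro ⟨c, hc⟩
    have hc' : m ^ 2 + 64 = |c| ^ 2 := by rw [sq_abs]; ring_nf; ring_nf at hc; linarith
    have hgt : m < |c| := by nlinarith [abs_nonneg c]
    set a := |c| - m with ha
    have ha1 : 1 ≤ a := by omega
    have ha64 : a * (a + 2 * m) = 64 := by ring_nf; nlinarith
    have ha7 : a ≤ 7 := by nlinarith
    interval_cases a <;> omega
  · rintro (rfl | rfl)
    · exact ⟨10, by norm_num⟩
    · exact ⟨17, by norm_num⟩

lemma aux2 : ∀ m : ℤ, (m = 6 ∨ m = 15) →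
    ¬ ∃ d : ℤ, 25 * m ^ 2 - 56 * m + 400 = d ^ 2 := by
  rintro m (rfl | rfl) ⟨d, hd⟩
  · norm_num at hd
    have h2 : |d| ≤ 32 := by nlinarith [sq_abs d, abs_nonneg d]
    have h3 : -32 ≤ d ∧ d ≤ 32 := abs_le.mp h2
    obtain ⟨h4, h5⟩ := h3
    interval_cases d <;> norm_num at hd
  · norm_num at hd
    have h2 : |d| ≤ 72 := by nlinarith [sq_abs d, abs_nonneg d]
    have h3 : -72 ≤ d ∧ d ≤ 72 := abs_le.mp h2
    obtain ⟨h4, h5⟩ := h3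
    interval_cases d <;> norm_num at hd

theorem stmt_10 :
    (∀ m : ℤ, 0 < m →
      ((∃ c : ℤ, (m + 8) ^ 2 - 16 * m = c ^ 2) ↔ m = 6 ∨ m = 15)) ∧
    (∀ m : ℤ, (m = 6 ∨ m = 15) →
      ¬ ∃ d : ℤ, 25 * m ^ 2 - 56 * m + 400 = d ^ 2) ∧
    ¬ ∃ m : ℤ, 0 < m ∧ (∃ c : ℤ, (m + 8) ^ 2 - 16 * m = c ^ 2) ∧
      (∃ d : ℤ, 25 * m ^ 2 - 56 * m + 400 = d ^ 2) := by
  refine ⟨aux1, aux2, ?_⟩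
  rintro ⟨m, hm, hc, hd⟩
  exact aux2 m ((aux1 m hm).mp hc) hd
end

section
/- There is no positive integer m such that both (m+2)^2 + 96 and 25m^2 - 84m + 900 are perfect squares. -/
theorem stmt_11 :
    ¬ ∃ m : ℤ, 0 < m ∧ (∃ c : ℤ, (m + 2) ^ 2 + 96 = c ^ 2) ∧
      (∃ d : ℤ, 25 * m ^ 2 - 84 * m + 900 = d ^ 2) := by
  rintro ⟨m, hm, ⟨c, hc⟩, ⟨d, hd⟩⟩
  -- bound m: |c| ≥ m+3
  have habs : |c| ≥ m + 3 := by
    by_contra h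
    push_neg at h
    nlinarith [sq_abs c, abs_nonneg c]
  have hm45 : m ≤ 45 := by nlinarith [sq_abs c, abs_nonneg c]
  -- move to ℕ
  set n := m.natAbs with hn
  have hmn : (n : ℤ) = m := Int.natAbs_of_nonneg hm.le
  have h1 : (n + 2) ^ 2 + 96 = c.natAbs ^ 2 := by
    have h' : ((n:ℤ) + 2) ^ 2 + 96 = (c.natAbs : ℤ) ^ 2 := by
      rw [hmn, Int.natAbs_sq]; exact hc
    exact_mod_cast h'
  have h2 : 25 * n ^ 2 + 900 = d.natAbs ^ 2 + 84 * n := by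
    have h' : 25 * (n:ℤ) ^ 2 + 900 = (d.natAbs : ℤ) ^ 2 + 84 * n := by
      rw [hmn, Int.natAbs_sq]; linarith
    exact_mod_cast h'
  have hn0 : 0 < n := by
    have : (0:ℤ) < (n:ℤ) := by rw [hmn]; exact hm
    exact_mod_cast this
  have hn45 : n ≤ 45 := by
    have : (n:ℤ) ≤ 45 := by rw [hmn]; exact hm45
    exact_mod_cast this
  -- bound c.natAbs
  have hcb : c.natAbs < 49 := by
    by_contra h
    push_neg at h
    have : 49 ^ 2 ≤ c.natAbs ^ 2 := Nat.pow_le_pow_left h 2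
    nlinarith
  have keyA : ∀ k < 46, ∀ a < 49, 0 < k → (k + 2) ^ 2 + 96 = a ^ 2 →
      k = 3 ∨ k = 8 ∨ k = 21 := by decide
  have hcase := keyA n (by omega) c.natAbs hcb hn0 h1
  -- in each case, second equation fails
  have hdb : d.natAbs < 102 := by
    by_contra h
    push_neg at h
    have : 102 ^ 2 ≤ d.natAbs ^ 2 := Nat.pow_le_pow_left h 2
    rcases hcase with h | h | h <;> rw [h] at h2 <;> norm_num at h2 <;> omega
  have keyB : ∀ b < 102, ¬ (873 = b ^ 2) ∧ ¬ (1828 = b ^ 2) ∧ ¬ (10161 = b ^ 2) := by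
    decide
  obtain ⟨hb1, hb2, hb3⟩ := keyB d.natAbs hdb
  rcases hcase with h | h | h <;> rw [h] at h2 <;> norm_num at h2 <;> omega
end
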